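/- Let F be an algebraically closed field of characteristic different from 2. Let (A, B) and (A', B') be pairs of n×n matrices over F such that A and A' are both symmetric or both skew-symmetric, and B and B' are both symmetric or both skew-symmetric. If there exist nonsingular matrices R, S with Rᵀ·A·S = A' and Rᵀ·B·S = B' (i.e., the pairs are equivalent), then there exists a nonsingular matrix N with Nᵀ·A·N = A' and Nᵀ·B·N = B' (i.e., the pairs are congruent). -/

import Mathlib

open Matrix Polynomial

/-- Newton iteration: in a commutative ring where 2 is a unit, an element whose
difference from the square of a unit is nilpotent (with nilpotency a power of two)
has a square root. -/
lemma newton_sqrt {R : Type*} [CommRing R] (h2 : IsUnit (2 : R)) :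
    ∀ (k : ℕ) (u b : R), IsUnit b → (b ^ 2 - u) ^ (2 ^ k) = 0 → ∃ x : R, x ^ 2 = u := by
  intro k
  induction k with
  | zero =>
    intro u b _ he
    exact ⟨b, by simpa [sub_eq_zero] using he⟩
  | succ k ih =>
    intro u b hb he
    obtain ⟨c, hc⟩ := (h2.mul hb).exists_right_inv
    -- hc : 2 * b * c = 1
    set e : R := b ^ 2 - u with he_def
    have hen : IsNilpotent e := ⟨2 ^ (k + 1), he⟩
    have hnil : IsNilpotent (-(e * c)) := ((Commute.all e c).isNilpotent_mul_right hen).neg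
    have hb' : IsUnit (b - e * c) := by
      have := hnil.isUnit_add_right_of_commute hb (Commute.all _ _)
      simpa [sub_eq_add_neg, add_comm] using this
    refine ih u (b - e * c) hb' ?_
    have key : (b - e * c) ^ 2 - u = e ^ 2 * c ^ 2 := by
      rw [he_def]
      linear_combination (-(b ^ 2 - u)) * hc
    have hexp : 2 * 2 ^ k = 2 ^ (k + 1) := by rw [pow_succ]; ring
    rw [key, mul_pow, ← pow_mul, ← pow_mul, hexp, he, zero_mul]

/-- Local square root: `X` has a polynomial square root modulo `(X - C lam) ^ m`
when `lam = mu ^ 2` for a nonzero `mu`. -/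
lemma local_sqrt {F : Type*} [Field F] (h2 : (2 : F) ≠ 0) {lam mu : F} (hmu : mu ^ 2 = lam)
    (hmu0 : mu ≠ 0) (m : ℕ) :
    ∃ s : Polynomial F, (X - C lam) ^ m ∣ s ^ 2 - X := by
  set I : Ideal (Polynomial F) := Ideal.span {(X - C lam) ^ m} with hI
  set π : Polynomial F →+* (Polynomial F ⧸ I) := Ideal.Quotient.mk I with hπ
  have h2F : IsUnit (2 : Polynomial F) := by
    have hC : IsUnit (C (2 : F)) := Polynomial.isUnit_C.mpr (isUnit_iff_ne_zero.mpr h2)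
    rwa [map_ofNat] at hC
  have h2Q : IsUnit (2 : Polynomial F ⧸ I) := by
    have := h2F.map π
    rwa [map_ofNat] at this
  have hbu : IsUnit (π (C mu)) := (Polynomial.isUnit_C.mpr (isUnit_iff_ne_zero.mpr hmu0)).map π
  have hmem : ((X - C lam) ^ m : Polynomial F) ∈ I := Ideal.subset_span rfl
  have hzero : π ((X - C lam) ^ m) = 0 := Ideal.Quotient.eq_zero_iff_mem.mpr hmem
  have hm : m ≤ 2 ^ m := Nat.le_of_lt (Nat.lt_two_pow_self (n := m))
  have hz2 : (π (X - C lam)) ^ (2 ^ m) = 0 := by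
    rw [← Nat.add_sub_cancel' hm, pow_add, ← map_pow, hzero, zero_mul]
  have hnil : ((π (C mu)) ^ 2 - π X) ^ (2 ^ m) = 0 := by
    have h1 : (π (C mu)) ^ 2 - π X = -(π (X - C lam)) := by
      rw [← map_pow, ← map_sub, ← map_neg]
      congr 1
      rw [← Polynomial.C_pow, hmu]
      ring
    rw [h1, show -(π (X - C lam)) = (-1) * π (X - C lam) by ring, mul_pow, hz2, mul_zero]
  obtain ⟨x, hx⟩ := newton_sqrt h2Q m (π X) (π (C mu)) hbu hnil
  obtain ⟨s, hs⟩ := Ideal.Quotient.mk_surjective x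
  have hzq : π (s ^ 2 - X) = 0 := by
    rw [map_sub, map_pow, hs, hx, sub_self]
  exact ⟨s, Ideal.mem_span_singleton.mp (Ideal.Quotient.eq_zero_iff_mem.mp hzq)⟩

/-- CRT combination of square roots of `t` modulo coprime elements. -/
lemma combine_sqrt {R : Type*} [CommRing R] {f q s₁ s₂ t : R} (hco : IsCoprime f q)
    (h1 : f ∣ s₁ ^ 2 - t) (h2 : q ∣ s₂ ^ 2 - t) : ∃ s : R, f * q ∣ s ^ 2 - t := by
  obtain ⟨a, b, hab⟩ := id hco
  set s := s₁ * (b * q) + s₂ * (a * f) with hs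
  have hd1 : f ∣ s ^ 2 - t := by
    have hdiff : f ∣ s - s₁ := ⟨(s₂ - s₁) * a, by rw [hs]; linear_combination s₁ * hab⟩
    have h' : f ∣ s ^ 2 - s₁ ^ 2 := by
      rw [show s ^ 2 - s₁ ^ 2 = (s - s₁) * (s + s₁) by ring]
      exact hdiff.mul_right _
    rw [show s ^ 2 - t = (s ^ 2 - s₁ ^ 2) + (s₁ ^ 2 - t) by ring]
    exact dvd_add h' h1
  have hd2 : q ∣ s ^ 2 - t := by
    have hdiff : q ∣ s - s₂ := ⟨(s₁ - s₂) * b, by rw [hs]; linear_combination s₂ * hab⟩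
    have h' : q ∣ s ^ 2 - s₂ ^ 2 := by
      rw [show s ^ 2 - s₂ ^ 2 = (s - s₂) * (s + s₂) by ring]
      exact hdiff.mul_right _
    rw [show s ^ 2 - t = (s ^ 2 - s₂ ^ 2) + (s₂ ^ 2 - t) by ring]
    exact dvd_add h' h2
  exact ⟨s, hco.mul_dvd hd1 hd2⟩

/-- Global square root: modulo a monic polynomial without zero root over an
algebraically closed field of characteristic ≠ 2, `X` is a square. -/
lemma global_sqrt {F : Type*} [Field F] [IsAlgClosed F] (h2 : (2 : F) ≠ 0)
    (p : Polynomial F) (hm : p.Monic) (h0 : ¬ p.IsRoot 0) :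
    ∃ s : Polynomial F, p ∣ s ^ 2 - X := by
  classical
  have key : ∀ (t : Finset F), (∀ x ∈ t, x ≠ 0) → ∀ m : F → ℕ,
      ∃ s : Polynomial F, (∏ x ∈ t, (X - C x) ^ (m x)) ∣ s ^ 2 - X := by
    intro t
    induction t using Finset.induction_on with
    | empty => intro _ m; exact ⟨0, by simp⟩
    | insert a t' ha ih' =>
      intro hne m
      have ha0 : a ≠ 0 := hne a (Finset.mem_insert_self a t')
      obtain ⟨mu, hmu⟩ := IsAlgClosed.exists_pow_nat_eq a (n := 2) (by norm_num)
      have hmu0 : mu ≠ 0 := by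
        intro h; apply ha0; rw [← hmu, h]; ring
      obtain ⟨s₁, hs₁⟩ := local_sqrt h2 hmu hmu0 (m a)
      obtain ⟨s₂, hs₂⟩ := ih' (fun x hx => hne x (Finset.mem_insert_of_mem hx)) m
      have hco : IsCoprime ((X - C a) ^ (m a)) (∏ x ∈ t', (X - C x) ^ (m x)) := by
        refine IsCoprime.prod_right fun x hx => ?_
        have hax : a ≠ x := fun h => ha (h ▸ hx)
        exact (Polynomial.isCoprime_X_sub_C_of_isUnit_sub
          (isUnit_iff_ne_zero.mpr (sub_ne_zero_of_ne hax))).pow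
      obtain ⟨s, hs⟩ := combine_sqrt hco hs₁ hs₂
      refine ⟨s, ?_⟩
      rwa [Finset.prod_insert ha]
  have hsplit : p = ∏ x ∈ p.roots.toFinset, (X - C x) ^ (p.roots.count x) := by
    conv_lhs => rw [(IsAlgClosed.splits p).eq_prod_roots_of_monic hm]
    exact Finset.prod_multiset_map_count _ _
  have hne : ∀ x ∈ p.roots.toFinset, x ≠ 0 := by
    intro x hx h0x
    apply h0
    subst h0x
    exact Polynomial.isRoot_of_mem_roots (Multiset.mem_toFinset.mp hx)
  obtain ⟨s, hs⟩ := key p.roots.toFinset hne (fun x => p.roots.count x)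
  exact ⟨s, hsplit ▸ hs⟩

/-- Transpose commutes with polynomial evaluation on square matrices. -/
lemma transpose_aeval {F : Type*} [CommRing F] {n : ℕ} (M : Matrix (Fin n) (Fin n) F)
    (p : Polynomial F) : (Polynomial.aeval M p)ᵀ = Polynomial.aeval Mᵀ p := by
  rw [Polynomial.aeval_eq_sum_range (p := p) M, Polynomial.aeval_eq_sum_range (p := p) Mᵀ,
    Matrix.transpose_sum]
  refine Finset.sum_congr rfl fun i _ => ?_
  rw [Matrix.transpose_smul, Matrix.transpose_pow]

/-- If `Mᵀ * A = A * M` then the same holds with `M` replaced by any polynomial in `M`. -/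
lemma aeval_comm {F : Type*} [CommRing F] {n : ℕ} {M A : Matrix (Fin n) (Fin n) F}
    (h : Mᵀ * A = A * M) (p : Polynomial F) :
    (Polynomial.aeval Mᵀ p) * A = A * Polynomial.aeval M p := by
  have hpow : ∀ k : ℕ, (Mᵀ) ^ k * A = A * M ^ k := by
    intro k
    induction k with
    | zero => simp
    | succ k ih =>
      rw [pow_succ, pow_succ, mul_assoc, ← mul_assoc _ Mᵀ A, ← mul_assoc]
      rw [mul_assoc ((Mᵀ)^k) Mᵀ A, h, ← mul_assoc, ih, mul_assoc]
  rw [Polynomial.aeval_eq_sum_range (p := p) M, Polynomial.aeval_eq_sum_range (p := p) Mᵀ,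
    Finset.sum_mul, Finset.mul_sum]
  refine Finset.sum_congr rfl fun i _ => ?_
  rw [smul_mul_assoc, hpow i, mul_smul_comm]

/-- Over an algebraically closed field of characteristic ≠ 2, equivalent pairs of
matrices, each of which is symmetric or skew-symmetric (matched in type), are congruent. -/
theorem stmt_5 (F : Type*) [Field F] [IsAlgClosed F] (hchar : ringChar F ≠ 2)
    (n : ℕ) (A B A' B' : Matrix (Fin n) (Fin n) F)
    (hA : (Aᵀ = A ∧ A'ᵀ = A') ∨ (Aᵀ = -A ∧ A'ᵀ = -A'))
    (hB : (Bᵀ = B ∧ B'ᵀ = B') ∨ (Bᵀ = -B ∧ B'ᵀ = -B'))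
    (R S : Matrix (Fin n) (Fin n) F) (hR : IsUnit R) (hS : IsUnit S)
    (hA' : Rᵀ * A * S = A') (hB' : Rᵀ * B * S = B') :
    ∃ N : Matrix (Fin n) (Fin n) F, IsUnit N ∧ Nᵀ * A * N = A' ∧ Nᵀ * B * N = B' := by
  have h2 : (2 : F) ≠ 0 := by
    intro h
    apply hchar
    have hdvd : ringChar F ∣ 2 := ringChar.dvd (by exact_mod_cast h)
    exact ((Nat.dvd_prime Nat.prime_two).mp hdvd).resolve_left CharP.ringChar_ne_one
  have hRdet : IsUnit R.det := (Matrix.isUnit_iff_isUnit_det R).mp hR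
  have hRTdet : IsUnit Rᵀ.det := by rwa [Matrix.det_transpose]
  set M : Matrix (Fin n) (Fin n) F := S * R⁻¹ with hMdef
  have hMR : M * R = S := by
    rw [hMdef, Matrix.nonsing_inv_mul_cancel_right _ _ hRdet]
  -- the key symmetry relation
  have keyrel : ∀ (X X' : Matrix (Fin n) (Fin n) F),
      ((Xᵀ = X ∧ X'ᵀ = X') ∨ (Xᵀ = -X ∧ X'ᵀ = -X')) → Rᵀ * X * S = X' →
      Mᵀ * X = X * M := by
    intro X X' hsym hX'
    have ht : (Rᵀ * X * S)ᵀ = Sᵀ * Xᵀ * R := by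
      rw [Matrix.transpose_mul, Matrix.transpose_mul, Matrix.transpose_transpose, mul_assoc]
    have hkey : Sᵀ * X * R = Rᵀ * X * S := by
      rcases hsym with ⟨hX, hX'2⟩ | ⟨hX, hX'2⟩
      · calc Sᵀ * X * R = (Rᵀ * X * S)ᵀ := by rw [ht, hX]
          _ = X'ᵀ := by rw [hX']
          _ = X' := hX'2
          _ = Rᵀ * X * S := hX'.symm
      · have h1 : -(Sᵀ * X * R) = -(Rᵀ * X * S) := by
          calc -(Sᵀ * X * R) = Sᵀ * Xᵀ * R := by rw [hX, mul_neg, neg_mul]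
            _ = (Rᵀ * X * S)ᵀ := ht.symm
            _ = X'ᵀ := by rw [hX']
            _ = -X' := hX'2
            _ = -(Rᵀ * X * S) := by rw [hX']
        exact neg_injective h1
    have hMT : Mᵀ = (Rᵀ)⁻¹ * Sᵀ := by
      rw [hMdef, Matrix.transpose_mul, Matrix.transpose_nonsing_inv]
    have hSX : Sᵀ * X = Rᵀ * X * S * R⁻¹ := by
      rw [← hkey, Matrix.mul_nonsing_inv_cancel_right _ _ hRdet]
    rw [hMT, mul_assoc, hSX, hMdef]
    rw [← mul_assoc (Rᵀ)⁻¹, ← mul_assoc (Rᵀ)⁻¹, ← mul_assoc (Rᵀ)⁻¹,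
      Matrix.nonsing_inv_mul _ hRTdet, one_mul, mul_assoc]
  have hMA : Mᵀ * A = A * M := keyrel A A' hA hA'
  have hMB : Mᵀ * B = B * M := keyrel B B' hB hB'
  -- M is a unit
  have hMunit : IsUnit M := hS.mul (by
    rw [Matrix.isUnit_iff_isUnit_det]
    exact Matrix.isUnit_nonsing_inv_det_iff.mpr hRdet)
  -- square root of M as a polynomial in M
  have hmonic : (Matrix.charpoly M).Monic := Matrix.charpoly_monic M
  have h0root : ¬ (Matrix.charpoly M).IsRoot 0 := by
    intro h
    have hdet : M.det = (-1) ^ Fintype.card (Fin n) * (Matrix.charpoly M).coeff 0 :=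
      Matrix.det_eq_sign_charpoly_coeff M
    have hc0 : (Matrix.charpoly M).coeff 0 = 0 := by
      rwa [Polynomial.coeff_zero_eq_eval_zero]
    have hd0 : M.det = 0 := by rw [hdet, hc0, mul_zero]
    exact ((Matrix.isUnit_iff_isUnit_det M).mp hMunit).ne_zero hd0
  obtain ⟨s, hsdvd⟩ := global_sqrt h2 (Matrix.charpoly M) hmonic h0root
  obtain ⟨h, hh⟩ := hsdvd
  have hsM : (Polynomial.aeval M s) * (Polynomial.aeval M s) = M := by
    have h1 := congrArg (Polynomial.aeval M) hh
    rw [map_sub, map_pow, _root_.map_mul, Polynomial.aeval_X,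
      Matrix.aeval_self_charpoly, zero_mul] at h1
    rw [← pow_two]
    exact sub_eq_zero.mp h1
  set P : Matrix (Fin n) (Fin n) F := Polynomial.aeval M s with hPdef
  have hPPu : IsUnit (P * P) := by rw [hsM]; exact hMunit
  have hPunit : IsUnit P := by
    rw [Matrix.isUnit_iff_isUnit_det]
    have hdet := (Matrix.isUnit_iff_isUnit_det _).mp hPPu
    rw [Matrix.det_mul] at hdet
    exact isUnit_of_mul_isUnit_left hdet
  have hPT : ∀ (X : Matrix (Fin n) (Fin n) F), Mᵀ * X = X * M → Pᵀ * X = X * P := by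
    intro X hX
    rw [hPdef, transpose_aeval]
    exact aeval_comm hX s
  have final : ∀ (X X' : Matrix (Fin n) (Fin n) F), Rᵀ * X * S = X' → Pᵀ * X = X * P →
      (P * R)ᵀ * X * (P * R) = X' := by
    intro X X' hX' hcomm
    rw [Matrix.transpose_mul]
    calc Rᵀ * Pᵀ * X * (P * R)
        = Rᵀ * ((Pᵀ * X) * P) * R := by simp only [mul_assoc]
      _ = Rᵀ * ((X * P) * P) * R := by rw [hcomm]
      _ = Rᵀ * (X * (P * P)) * R := by simp only [mul_assoc]
      _ = Rᵀ * (X * M) * R := by rw [hsM]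
      _ = Rᵀ * X * (M * R) := by simp only [mul_assoc]
      _ = Rᵀ * X * S := by rw [hMR]
      _ = X' := hX'
  exact ⟨P * R, hPunit.mul hR, final A A' hA' (hPT A hMA), final B B' hB' (hPT B hMB)⟩
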